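/- Let G be a finite group. Then every subgroup of G is a perfect code of G if and only if the Sylow 2-subgroups of G are elementary abelian (equivalently, G contains no element of order 4). -/
import Mathlib

/-- A subgroup `H` of a group `G` is a *perfect code* of `G` if `H` admits an
inverse-closed left transversal in `G`, i.e. there is a set `T ⊆ G` with
`T⁻¹ = T` such that every element of `G` lies in exactly one left coset `tH`, `t ∈ T`. -/
def IsPerfectCode {G : Type*} [Group G] (H : Subgroup G) : Prop :=
  ∃ T : Set G, T⁻¹ = T ∧ ∀ g : G, ∃! t : G, t ∈ T ∧ t⁻¹ * g ∈ H

set_option linter.unusedSectionVars false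

section Matching

variable {Q : Type*} [Fintype Q] [LinearOrder Q] (R : Q → Q → Prop)

open Classical in
noncomputable def Nf (a : Q) : Finset Q := Finset.univ.filter (fun c => R a c)

lemma mem_Nf {a b : Q} : b ∈ Nf R a ↔ R a b := by
  classical
  simp [Nf]

open Classical in
noncomputable def Mf (a : Q) : Finset Q :=
  Finset.univ.filter (fun c => ∃ b, R a b ∧ R c b)

lemma mem_Mf {a c : Q} : c ∈ Mf R a ↔ ∃ b, R a b ∧ R c b := by
  classical
  simp [Mf]

/-- A chosen equivalence between two finsets of equal card. -/
noncomputable def EfEquiv (A B : Finset Q) (h : A.card = B.card) :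
    {x // x ∈ A} ≃ {y // y ∈ B} :=
  Fintype.equivOfCardEq (by simpa using h)

/-- A chosen pair of mutually inverse maps between two finsets of equal card. -/
noncomputable def Ef (A B : Finset Q) : (Q → Q) × (Q → Q) :=
  if h : A.card = B.card then
    (fun x => if hx : x ∈ A then (EfEquiv A B h ⟨x, hx⟩ : Q) else x,
     fun y => if hy : y ∈ B then ((EfEquiv A B h).symm ⟨y, hy⟩ : Q) else y)
  else (id, id)

lemma Ef_maps {A B : Finset Q} (h : A.card = B.card) {x : Q} (hx : x ∈ A) :
    (Ef A B).1 x ∈ B := by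
  rw [Ef, dif_pos h]
  simp only [dif_pos hx]
  exact (EfEquiv A B h ⟨x, hx⟩).2

lemma Ef_left_inv {A B : Finset Q} (h : A.card = B.card) {x : Q} (hx : x ∈ A) :
    (Ef A B).2 ((Ef A B).1 x) = x := by
  rw [Ef, dif_pos h]
  simp only [dif_pos hx]
  have hb : (EfEquiv A B h ⟨x, hx⟩ : Q) ∈ B := (EfEquiv A B h ⟨x, hx⟩).2
  simp only [dif_pos hb, Subtype.coe_eta, Equiv.symm_apply_apply]

lemma Ef_maps' {A B : Finset Q} (h : A.card = B.card) {y : Q} (hy : y ∈ B) :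
    (Ef A B).2 y ∈ A := by
  rw [Ef, dif_pos h]
  simp only [dif_pos hy]
  exact ((EfEquiv A B h).symm ⟨y, hy⟩).2

lemma Ef_right_inv {A B : Finset Q} (h : A.card = B.card) {y : Q} (hy : y ∈ B) :
    (Ef A B).1 ((Ef A B).2 y) = y := by
  rw [Ef, dif_pos h]
  simp only [dif_pos hy]
  have ha : ((EfEquiv A B h).symm ⟨y, hy⟩ : Q) ∈ A := ((EfEquiv A B h).symm ⟨y, hy⟩).2
  simp only [dif_pos ha, Subtype.coe_eta, Equiv.apply_symm_apply]

lemma exists_involution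
    (hsymm : ∀ {a b}, R a b → R b a)
    (htot : ∀ a, ∃ b, R a b)
    (hdif : ∀ {a b c d}, R a b → R c b → R c d → R a d)
    (hcard : ∀ {a b}, R a b → Nat.card {c // R a c} = Nat.card {c // R b c}) :
    ∃ σ : Q → Q, (∀ a, σ (σ a) = a) ∧ ∀ a, R a (σ a) := by
  classical
  -- translate card hyp to finsets
  have hNcard : ∀ a : Q, (Nf R a).card = Nat.card {c // R a c} := by
    intro a
    rw [← Nat.card_eq_finsetCard]
    exact Nat.card_congr (Equiv.subtypeEquivRight (fun c => (mem_Nf R).symm)).symm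
  have hcard' : ∀ {a b}, R a b → (Nf R a).card = (Nf R b).card := by
    intro a b hab
    rw [hNcard, hNcard]
    exact hcard hab
  have hMN : ∀ {a b}, R a b → Mf R a = Nf R b := by
    intro a b hab
    ext c
    rw [mem_Mf, mem_Nf]
    constructor
    · rintro ⟨b', hab', hcb'⟩
      exact hsymm (hdif hcb' hab' hab)
    · intro hbc
      exact ⟨b, hab, hsymm hbc⟩
  have hmemM : ∀ a, a ∈ Mf R a := by
    intro a
    obtain ⟨b, hb⟩ := htot a
    exact (mem_Mf R).2 ⟨b, hb, hb⟩
  have hMne : ∀ a, (Mf R a).Nonempty := fun a => ⟨a, hmemM a⟩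
  have hNne : ∀ a, (Nf R a).Nonempty := by
    intro a
    obtain ⟨b, hb⟩ := htot a
    exact ⟨b, (mem_Nf R).2 hb⟩
  have hcardMN : ∀ a, (Mf R a).card = (Nf R a).card := by
    intro a
    obtain ⟨b, hb⟩ := htot a
    rw [hMN hb, hcard' hb]
  -- loops
  have hloopMN : ∀ {a}, R a a → Mf R a = Nf R a := fun {a} h => hMN h
  have hloop_of_eq : ∀ {a}, Mf R a = Nf R a → R a a := by
    intro a h
    exact (mem_Nf R).1 (h ▸ hmemM a)
  have hdisj : ∀ {a}, ¬R a a → ∀ c, c ∈ Mf R a → c ∉ Nf R a := by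
    intro a hla c hcM hcN
    have hac : R a c := (mem_Nf R).1 hcN
    have h1 : Mf R a = Nf R c := hMN hac
    have h2 : Mf R c = Nf R a := hMN (hsymm hac)
    have hcc : R c c := (mem_Nf R).1 (h1 ▸ hcM)
    exact hla (hloop_of_eq (by rw [h1, ← hloopMN hcc, h2]))
  have hntrans : ∀ {a b}, R a b → ¬R a a → ¬R b b := by
    intro a b hab hla hlb
    have h1 : Mf R a = Nf R b := hMN hab
    have h2 : Mf R b = Nf R a := hMN (hsymm hab)
    exact hla (hloop_of_eq (by rw [h1, ← hloopMN hlb, h2]))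
  have hminne : ∀ {a}, ¬R a a → (Mf R a).min ≠ (Nf R a).min := by
    intro a hla heq
    obtain ⟨x, hx⟩ := Finset.min_of_nonempty (hMne a)
    obtain ⟨y, hy⟩ := Finset.min_of_nonempty (hNne a)
    rw [hx, hy] at heq
    have : x = y := by exact_mod_cast heq
    exact hdisj hla x (Finset.mem_of_min hx) (this ▸ Finset.mem_of_min hy)
  -- define sigma
  classical
  set σ : Q → Q := fun a =>
    if R a a then a
    else if (Mf R a).min ≤ (Nf R a).min then (Ef (Mf R a) (Nf R a)).1 a
    else (Ef (Nf R a) (Mf R a)).2 a with hσdef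
  have hσeq : ∀ a, σ a =
      if R a a then a
      else if (Mf R a).min ≤ (Nf R a).min then (Ef (Mf R a) (Nf R a)).1 a
      else (Ef (Nf R a) (Mf R a)).2 a := fun a => rfl
  have main : ∀ a, R a (σ a) ∧ σ (σ a) = a := by
    intro a
    by_cases hla : R a a
    · have h1 : σ a = a := by rw [hσeq a, if_pos hla]
      rw [h1]
      exact ⟨hla, h1⟩
    · by_cases hp : (Mf R a).min ≤ (Nf R a).min
      · have hσa : σ a = (Ef (Mf R a) (Nf R a)).1 a := by
          rw [hσeq a, if_neg hla, if_pos hp]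
        have hbN : (Ef (Mf R a) (Nf R a)).1 a ∈ Nf R a := Ef_maps (hcardMN a) (hmemM a)
        rw [hσa]
        have hab : R a ((Ef (Mf R a) (Nf R a)).1 a) := (mem_Nf R).1 hbN
        refine ⟨hab, ?_⟩
        have hlb : ¬R ((Ef (Mf R a) (Nf R a)).1 a) ((Ef (Mf R a) (Nf R a)).1 a) :=
          hntrans hab hla
        have hMb : Mf R ((Ef (Mf R a) (Nf R a)).1 a) = Nf R a := hMN (hsymm hab)
        have hNb : Nf R ((Ef (Mf R a) (Nf R a)).1 a) = Mf R a := (hMN hab).symm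
        have hpb : ¬(Mf R ((Ef (Mf R a) (Nf R a)).1 a)).min ≤
            (Nf R ((Ef (Mf R a) (Nf R a)).1 a)).min := by
          rw [hMb, hNb]
          exact not_le.2 (lt_of_le_of_ne hp (hminne hla))
        rw [hσeq, if_neg hlb, if_neg hpb, hNb, hMb]
        exact Ef_left_inv (hcardMN a) (hmemM a)
      · have hσa : σ a = (Ef (Nf R a) (Mf R a)).2 a := by
          rw [hσeq a, if_neg hla, if_neg hp]
        have hbN : (Ef (Nf R a) (Mf R a)).2 a ∈ Nf R a := Ef_maps' (hcardMN a).symm (hmemM a)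
        rw [hσa]
        have hab : R a ((Ef (Nf R a) (Mf R a)).2 a) := (mem_Nf R).1 hbN
        refine ⟨hab, ?_⟩
        have hlb : ¬R ((Ef (Nf R a) (Mf R a)).2 a) ((Ef (Nf R a) (Mf R a)).2 a) :=
          hntrans hab hla
        have hMb : Mf R ((Ef (Nf R a) (Mf R a)).2 a) = Nf R a := hMN (hsymm hab)
        have hNb : Nf R ((Ef (Nf R a) (Mf R a)).2 a) = Mf R a := (hMN hab).symm
        have hpb : (Mf R ((Ef (Nf R a) (Mf R a)).2 a)).min ≤
            (Nf R ((Ef (Nf R a) (Mf R a)).2 a)).min := by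
          rw [hMb, hNb]
          exact le_of_lt (not_le.1 hp)
        rw [hσeq, if_neg hlb, if_pos hpb, hMb, hNb]
        exact Ef_right_inv (hcardMN a).symm (hmemM a)
  exact ⟨σ, fun a => (main a).2, fun a => (main a).1⟩

end Matching

section GroupSide

variable {G : Type*} [Group G]

/-- The "inverse coset" relation on `G ⧸ H`. -/
def NRel (H : Subgroup G) (C D : G ⧸ H) : Prop :=
  ∃ t : G, (t : G ⧸ H) = C ∧ ((t⁻¹ : G) : G ⧸ H) = D

lemma nrel_symm {H : Subgroup G} {C D : G ⧸ H} (h : NRel H C D) : NRel H D C := by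
  obtain ⟨t, h1, h2⟩ := h
  exact ⟨t⁻¹, h2, by simpa using h1⟩

lemma nrel_total (H : Subgroup G) (C : G ⧸ H) : ∃ D, NRel H C D :=
  ⟨(((C.out)⁻¹ : G) : G ⧸ H), C.out, QuotientGroup.out_eq' C, rfl⟩

lemma nrel_difunc {H : Subgroup G} {a b c d : G ⧸ H}
    (h1 : NRel H a b) (h2 : NRel H c b) (h3 : NRel H c d) : NRel H a d := by
  obtain ⟨t, ht1, ht2⟩ := h1
  obtain ⟨v, hv1, hv2⟩ := h2
  obtain ⟨u, hu1, hu2⟩ := h3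
  have hm1 : v⁻¹ * u ∈ H := QuotientGroup.eq.mp (hv1.trans hu1.symm)
  have hm2 : v * t⁻¹ ∈ H := by
    have := QuotientGroup.eq.mp (hv2.trans ht2.symm)
    simpa using this
  refine ⟨t * (v⁻¹ * u), ?_, ?_⟩
  · rw [QuotientGroup.mk_mul_of_mem _ hm1, ht1]
  · have he : (t * (v⁻¹ * u))⁻¹ = u⁻¹ * (v * t⁻¹) := by group
    rw [he, QuotientGroup.mk_mul_of_mem _ hm2, hu2]

/-- The double coset `H x H` as a set. -/
def DS (H : Subgroup G) (x : G) : Set G :=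
  {g | ∃ h₁ ∈ H, ∃ h₂ ∈ H, g = h₁ * x * h₂}

lemma DS_mul_mem {H : Subgroup G} {x g h : G} (hg : g ∈ DS H x) (hh : h ∈ H) :
    g * h ∈ DS H x := by
  obtain ⟨h₁, hh₁, h₂, hh₂, rfl⟩ := hg
  exact ⟨h₁, hh₁, h₂ * h, H.mul_mem hh₂ hh, by group⟩

lemma DS_inv_mem {H : Subgroup G} {x g : G} (hg : g ∈ DS H x) : g⁻¹ ∈ DS H x⁻¹ := by
  obtain ⟨h₁, hh₁, h₂, hh₂, rfl⟩ := hg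
  exact ⟨h₂⁻¹, H.inv_mem hh₂, h₁⁻¹, H.inv_mem hh₁, by group⟩

lemma DS_card_inv (H : Subgroup G) (x : G) : Nat.card (DS H x⁻¹) = Nat.card (DS H x) := by
  apply Nat.card_congr
  refine ⟨fun g => ⟨(g : G)⁻¹, by simpa using DS_inv_mem g.2⟩,
          fun g => ⟨(g : G)⁻¹, DS_inv_mem g.2⟩, ?_, ?_⟩
  · intro g; simp
  · intro g; simp

/-- Counting: a right-`H`-stable set is (number of left cosets whose `out` lies in it) × |H|. -/
lemma card_stable_set (H : Subgroup G) (S : Set G)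
    (hS : ∀ g ∈ S, ∀ h ∈ H, g * h ∈ S) :
    Nat.card S = Nat.card {c : G ⧸ H // (c.out : G) ∈ S} * Nat.card H := by
  rw [← Nat.card_prod]
  apply Nat.card_congr
  refine ⟨fun g => ⟨⟨((g : G) : G ⧸ H), ?_⟩, ⟨((((g : G) : G ⧸ H)).out)⁻¹ * g, ?_⟩⟩,
          fun p => ⟨(p.1 : G ⧸ H).out * (p.2 : G), hS _ p.1.2 _ p.2.2⟩, ?_, ?_⟩
  · -- out of the coset of g lies in S
    have hmem : (g : G)⁻¹ * (((g : G) : G ⧸ H)).out ∈ H := by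
      have : ((g : G) : G ⧸ H) = ((((g : G) : G ⧸ H)).out : G) := (QuotientGroup.out_eq' _).symm
      exact QuotientGroup.eq.mp this
    have := hS _ g.2 _ hmem
    simpa [mul_assoc] using this
  · -- the H-component
    have : ((g : G) : G ⧸ H) = ((((g : G) : G ⧸ H)).out : G) := (QuotientGroup.out_eq' _).symm
    have h1 : (g : G)⁻¹ * (((g : G) : G ⧸ H)).out ∈ H := QuotientGroup.eq.mp this
    have h2 := H.inv_mem h1
    simpa [mul_inv_rev] using h2
  · intro g
    apply Subtype.ext
    simp [mul_inv_cancel_left]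
  · rintro ⟨⟨c, hc⟩, ⟨h, hh⟩⟩
    have hq : (((c.out * h : G)) : G ⧸ H) = c := by
      rw [QuotientGroup.mk_mul_of_mem _ hh, QuotientGroup.out_eq']
    ext
    · simpa using hq
    · simp only
      rw [hq, inv_mul_cancel_left]

end GroupSide

section GroupSide2

variable {G : Type*} [Group G] [Finite G]

lemma nrel_iff_DS {H : Subgroup G} {a : G ⧸ H} {t : G} (ht : (t : G ⧸ H) = a) (c : G ⧸ H) :
    NRel H a c ↔ (c.out : G) ∈ DS H t⁻¹ := by
  constructor
  · rintro ⟨s, hs1, hs2⟩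
    have h1 : t⁻¹ * s ∈ H := QuotientGroup.eq.mp (ht.trans hs1.symm)
    have h2 : s * c.out ∈ H := by
      have := QuotientGroup.eq.mp (hs2.trans (QuotientGroup.out_eq' c).symm)
      simpa using this
    refine ⟨(t⁻¹ * s)⁻¹, H.inv_mem h1, s * c.out, h2, ?_⟩
    group
  · rintro ⟨h₁, hh₁, h₂, hh₂, hout⟩
    refine ⟨t * h₁⁻¹, ?_, ?_⟩
    · rw [QuotientGroup.mk_mul_of_mem _ (H.inv_mem hh₁), ht]
    · have he : (t * h₁⁻¹)⁻¹ = (h₁ * t⁻¹ * h₂) * h₂⁻¹ := by group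
      rw [he, ← hout, QuotientGroup.mk_mul_of_mem _ (H.inv_mem hh₂), QuotientGroup.out_eq']

lemma nrel_card {H : Subgroup G} {a b : G ⧸ H} (hab : NRel H a b) :
    Nat.card {c : G ⧸ H // NRel H a c} = Nat.card {c : G ⧸ H // NRel H b c} := by
  obtain ⟨t, ht1, ht2⟩ := hab
  have hA : Nat.card {c : G ⧸ H // NRel H a c} = Nat.card {c : G ⧸ H // (c.out : G) ∈ DS H t⁻¹} :=
    Nat.card_congr (Equiv.subtypeEquivRight (fun c => nrel_iff_DS ht1 c))
  have hB : Nat.card {c : G ⧸ H // NRel H b c} = Nat.card {c : G ⧸ H // (c.out : G) ∈ DS H t} := by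
    apply Nat.card_congr
    apply Equiv.subtypeEquivRight
    intro c
    have := nrel_iff_DS ht2 c
    rwa [inv_inv] at this
  have c1 := card_stable_set H (DS H t⁻¹) (fun g hg h hh => DS_mul_mem hg hh)
  have c2 := card_stable_set H (DS H t) (fun g hg h hh => DS_mul_mem hg hh)
  have c3 : Nat.card (DS H t⁻¹) = Nat.card (DS H t) := DS_card_inv H t
  have hHpos : 0 < Nat.card H := Nat.card_pos
  rw [hA, hB]
  have := c1.symm.trans (c3.trans c2)
  exact Nat.eq_of_mul_eq_mul_right hHpos this

/-- If `G` has no element of order 4, any `g` whose square lies in `H` can be modified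
by an element of `H` to an involution. -/
lemma exists_sq_one {H : Subgroup G} (h4 : ∀ x : G, orderOf x ≠ 4) {g : G}
    (hg : g * g ∈ H) : ∃ h ∈ H, (g * h) * (g * h) = 1 := by
  have hn : orderOf g ≠ 0 := (orderOf_pos g).ne'
  have h4n : ¬(4 ∣ orderOf g) := by
    rintro ⟨k, hk⟩
    have hk0 : k ≠ 0 := by
      intro h0; rw [h0, Nat.mul_zero] at hk; exact hn hk
    have : orderOf (g ^ k) = 4 := by
      rw [orderOf_pow g, hk, Nat.gcd_eq_right ⟨4, Nat.mul_comm 4 k ▸ rfl⟩,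
        Nat.mul_div_cancel _ (Nat.pos_of_ne_zero hk0)]
    exact h4 _ this
  obtain ⟨m, hmodd, hm⟩ : ∃ m, Odd m ∧ g ^ (2 * m) = 1 := by
    rcases Nat.even_or_odd (orderOf g) with he | ho
    · obtain ⟨m, hm⟩ := he
      refine ⟨m, ?_, ?_⟩
      · rcases Nat.even_or_odd m with hme | hmo
        · obtain ⟨j, hj⟩ := hme
          exact absurd ⟨j, by omega⟩ h4n
        · exact hmo
      · rw [show 2 * m = orderOf g by omega, pow_orderOf_eq_one]
    · exact ⟨orderOf g, ho, by rw [mul_comm, pow_mul, pow_orderOf_eq_one, one_pow]⟩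
  have hm1 : m ≠ 0 := by
    rintro rfl
    simp at hmodd
  refine ⟨g ^ (m - 1), ?_, ?_⟩
  · obtain ⟨j, hj⟩ := hmodd
    have : m - 1 = 2 * j := by omega
    rw [this, pow_mul]
    exact H.pow_mem (by simpa [pow_two] using hg) j
  · have h1 : g * g ^ (m - 1) = g ^ m := by
      conv_rhs => rw [show m = (m - 1) + 1 by omega]
      rw [pow_succ']
    rw [h1, ← pow_add]
    rw [show m + m = 2 * m by ring, hm]

end GroupSide2

section Assembly

variable {G : Type*} [Group G] [Finite G]

lemma isPerfectCode_of_no_order_four (h4 : ∀ x : G, orderOf x ≠ 4) (H : Subgroup G) :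
    IsPerfectCode H := by
  classical
  letI : Fintype (G ⧸ H) := Fintype.ofFinite _
  letI : LinearOrder (G ⧸ H) := LinearOrder.lift' (Fintype.equivFin (G ⧸ H)) (Equiv.injective _)
  obtain ⟨σ, hσ2, hσR⟩ := exists_involution (NRel H)
    (fun h => nrel_symm h) (nrel_total H)
    (fun h1 h2 h3 => nrel_difunc h1 h2 h3) (fun h => nrel_card h)
  -- a coherent choice of coset representatives
  have hP : ∀ C : G ⧸ H, ∃ t : G, ((t : G ⧸ H) = C) ∧ (((t⁻¹ : G) : G ⧸ H) = σ C) ∧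
      (σ C = C → t⁻¹ = t) := by
    intro C
    obtain ⟨t, ht1, ht2⟩ := hσR C
    by_cases h : σ C = C
    · have hsq : t * t ∈ H := by
        have : ((t⁻¹ : G) : G ⧸ H) = ((t : G) : G ⧸ H) := by rw [ht2, h, ht1]
        simpa using QuotientGroup.eq.mp this
      obtain ⟨h', hh', hone⟩ := exists_sq_one h4 hsq
      refine ⟨t * h', ?_, ?_, fun _ => ?_⟩
      · rw [QuotientGroup.mk_mul_of_mem _ hh', ht1]
      · rw [inv_eq_of_mul_eq_one_right hone, QuotientGroup.mk_mul_of_mem _ hh', ht1, h]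
      · exact inv_eq_of_mul_eq_one_right hone
    · exact ⟨t, ht1, ht2, fun hc => absurd hc h⟩
  choose p hp1 hp2 hp3 using hP
  set r : G ⧸ H → G := fun C => if σ C < C then (p (σ C))⁻¹ else p C with hrdef
  have hr1 : ∀ C, ((r C : G) : G ⧸ H) = C := by
    intro C
    by_cases h : σ C < C
    · simp only [hrdef, if_pos h]
      rw [hp2 (σ C), hσ2]
    · simp only [hrdef, if_neg h]
      exact hp1 C
  have hrinv : ∀ C, (r C)⁻¹ = r (σ C) := by
    intro C
    rcases lt_trichotomy (σ C) C with h | h | h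
    · have h2 : ¬(σ (σ C) < σ C) := by rw [hσ2]; exact fun hc => absurd h (lt_asymm hc)
      simp only [hrdef, if_pos h, if_neg h2, inv_inv]
    · have h2 : ¬(σ C < C) := by rw [h]; exact lt_irrefl C
      have h3 : ¬(σ (σ C) < σ C) := by rw [hσ2, h]; exact lt_irrefl C
      simp only [hrdef, if_neg h2, if_neg h3]
      rw [h, hp3 C h]
    · have h2 : ¬(σ C < C) := lt_asymm h
      have h3 : σ (σ C) < σ C := by rw [hσ2]; exact h
      simp only [hrdef, if_neg h2, if_pos h3, hσ2]
  refine ⟨Set.range r, ?_, ?_⟩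
  · ext g
    simp only [Set.mem_inv, Set.mem_range]
    constructor
    · rintro ⟨C, hC⟩
      exact ⟨σ C, by rw [← hrinv C, hC, inv_inv]⟩
    · rintro ⟨C, hC⟩
      exact ⟨σ C, by rw [← hrinv C, hC]⟩
  · intro g
    refine ⟨r ((g : G ⧸ H)), ⟨⟨_, rfl⟩, ?_⟩, ?_⟩
    · exact QuotientGroup.eq.mp (hr1 _)
    · rintro t ⟨⟨C, rfl⟩, ht⟩
      have hCg : C = ((g : G) : G ⧸ H) := (hr1 C).symm.trans (QuotientGroup.eq.mpr ht)
      rw [hCg]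

end Assembly

section Easy

variable {G : Type*} [Group G]

lemma no_order_four_of_forall_perfectCode
    (hall : ∀ H : Subgroup G, IsPerfectCode H) (x : G) (hx : orderOf x = 4) : False := by
  obtain ⟨T, hTinv, hT⟩ := hall (Subgroup.zpowers (x * x))
  obtain ⟨t, ⟨htT, htH⟩, huniq⟩ := hT x
  obtain ⟨k, hk⟩ := Subgroup.mem_zpowers_iff.mp htH
  have ht'T : t⁻¹ ∈ T := by
    rw [← hTinv]
    exact Set.mem_inv.mpr (by simpa using htT)
  have hteq : t = x * (x * x) ^ (-k : ℤ) := by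
    have h1 : t⁻¹ = (x * x) ^ k * x⁻¹ := by
      rw [hk]; group
    rw [← inv_inv t, h1]
    group
  have hcomm : Commute x ((x * x) ^ (-k : ℤ)) :=
    ((Commute.refl x).mul_right (Commute.refl x)).zpow_right (-k)
  have ht'H : (t⁻¹)⁻¹ * x ∈ Subgroup.zpowers (x * x) := by
    rw [inv_inv, hteq, mul_assoc, ← hcomm.eq, ← mul_assoc]
    exact Subgroup.mul_mem _ (Subgroup.mem_zpowers (x * x))
      (Subgroup.zpow_mem _ (Subgroup.mem_zpowers (x * x)) (-k))
  have heq : t⁻¹ = t := huniq t⁻¹ ⟨ht'T, ht'H⟩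
  have htt : t * t = 1 := by
    nth_rewrite 1 [← heq]
    exact inv_mul_cancel t
  have key : (x * x) ^ (1 + (-k + -k) : ℤ) = 1 := by
    have e1 : (x * (x * x) ^ (-k : ℤ)) * (x * (x * x) ^ (-k : ℤ))
        = (x * x) ^ (1 + (-k + -k) : ℤ) := by
      calc (x * (x * x) ^ (-k : ℤ)) * (x * (x * x) ^ (-k : ℤ))
          = x * ((x * x) ^ (-k : ℤ) * x) * (x * x) ^ (-k : ℤ) := by
            simp [mul_assoc]
        _ = x * (x * (x * x) ^ (-k : ℤ)) * (x * x) ^ (-k : ℤ) := by rw [← hcomm.eq]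
        _ = (x * x) * ((x * x) ^ (-k : ℤ) * (x * x) ^ (-k : ℤ)) := by
            simp [mul_assoc]
        _ = (x * x) ^ (1 : ℤ) * ((x * x) ^ (-k : ℤ) * (x * x) ^ (-k : ℤ)) := by
            rw [zpow_one]
        _ = (x * x) ^ (1 + (-k + -k) : ℤ) := by
            rw [zpow_add, zpow_add]
    rw [← e1, ← hteq, htt]
  have ho2 : orderOf (x * x) = 2 := by
    have hxx : x * x = x ^ 2 := by rw [pow_two]
    rw [hxx, orderOf_pow' x (by norm_num : (2:ℕ) ≠ 0), hx]
    rfl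
  have hdvd : ((2 : ℕ) : ℤ) ∣ (1 + (-k + -k)) := by
    rw [← ho2]
    exact orderOf_dvd_iff_zpow_eq_one.mpr key
  obtain ⟨m, hm⟩ := hdvd
  omega

end Easy

theorem forall_perfectCode_iff_no_order_four {G : Type*} [Group G] [Finite G] :
    (∀ H : Subgroup G, IsPerfectCode H) ↔ ∀ x : G, orderOf x ≠ 4 := by
  constructor
  · intro hall x hx
    exact no_order_four_of_forall_perfectCode hall x hx
  · intro h4 H
    exact isPerfectCode_of_no_order_four h4 H
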